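/- Let γ: ℝ → ℝ³ be an l-periodic real analytic curve parametrized by arc-length, injective on [0,l), with positive curvature κ(t) = ‖γ''(t)‖ for all t, and let C be its image. If T is a Euclidean isometry of ℝ³ with T(C) = C such that T(P) ≠ P for some point P ∈ C, then the curvature function κ has a symmetry: there exist σ ∈ {1,−1} and c ∈ ℝ with (σ,c) not inducing the identity reparametrization (i.e. not both σ = 1 and c ∈ lℤ) such that κ(t) = κ(σt + c) for all t ∈ ℝ. -/

import Mathlib

noncomputable section

/-- Euclidean 3-space. -/
abbrev R3 : Type := EuclideanSpace ℝ (Fin 3)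

/-- The curvature function `κ(t) = ‖γ''(t)‖` of a unit-speed curve. -/
def curvature (γ : ℝ → R3) (t : ℝ) : ℝ := ‖deriv (deriv γ) t‖

lemma sep_lemma {γ : ℝ → R3} (hc : Continuous γ) {J : Set ℝ} (hJ : IsCompact J)
    {W : Set ℝ} (hW : IsOpen W) {s1 : ℝ} (hK : γ s1 ∉ γ '' (J \ W)) :
    ∃ ρ > 0, ∀ v ∈ J, dist (γ v) (γ s1) < ρ → v ∈ W := by
  have hKc : IsCompact (γ '' (J \ W)) := (hJ.diff hW).image hc
  obtain ⟨ρ, hρ, hball⟩ := Metric.isOpen_iff.1 hKc.isClosed.isOpen_compl _ hK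
  refine ⟨ρ, hρ, fun v hv hd => ?_⟩
  by_contra hvW
  exact hball (Metric.mem_ball.2 hd) (Set.mem_image_of_mem γ ⟨hv, hvW⟩)

lemma analyticAt_hasStrictDerivAt {f : ℝ → ℝ} {x : ℝ} (h : AnalyticAt ℝ f x) :
    HasStrictDerivAt f (deriv f x) x := by
  obtain ⟨p, hp⟩ := h
  have := hp.hasStrictDerivAt
  rwa [← hp.deriv] at this


set_option maxHeartbeats 1000000 in
/-- Let `γ : ℝ → ℝ³` be an `l`-periodic real analytic unit-speed curve, injective on
`[0,l)`, with positive curvature, and let `C` be its image.  If `T` is a Euclidean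
isometry of `ℝ³` with `T(C) = C` and `T(P) ≠ P` for some `P ∈ C`, then the
curvature function has a symmetry: there exist `σ ∈ {1,-1}` and `c ∈ ℝ`, not both
`σ = 1` and `c ∈ lℤ` (so that `t ↦ σt + c` is not the identity reparametrization),
with `κ(t) = κ(σt + c)` for all `t`. -/
theorem curve_symmetry_induces_curvature_symmetry
    (l : ℝ) (hl : 0 < l) (γ : ℝ → R3)
    (hγ : ∀ t, AnalyticAt ℝ γ t) (hper : ∀ t, γ (t + l) = γ t)
    (hinj : Set.InjOn γ (Set.Ico 0 l)) (hunit : ∀ t, ‖deriv γ t‖ = 1)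
    (hcurv : ∀ t, 0 < curvature γ t)
    (T : R3 ≃ᵢ R3) (hT : T '' Set.range γ = Set.range γ)
    (P : R3) (hP : P ∈ Set.range γ) (hTP : T P ≠ P) :
    ∃ σ c : ℝ, (σ = 1 ∨ σ = -1) ∧ ¬ (σ = 1 ∧ ∃ k : ℤ, c = k * l) ∧
      ∀ t : ℝ, curvature γ t = curvature γ (σ * t + c) := by
  classical
  have hperiodic : Function.Periodic γ l := hper
  -- basic analytic facts about γ
  have hγanOn : AnalyticOnNhd ℝ γ Set.univ := fun x _ => hγ x
  have hγcont : Continuous γ := continuous_iff_continuousAt.2 fun t => (hγ t).continuousAt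
  have hγd : ∀ t, HasDerivAt γ (deriv γ t) t := fun t =>
    (hγ t).differentiableAt.hasDerivAt
  have hud : ∀ t, HasDerivAt (deriv γ) (deriv (deriv γ) t) t := fun t =>
    ((hγanOn.deriv t (Set.mem_univ t)).differentiableAt).hasDerivAt
  -- affine decomposition of T
  set L := T.toRealAffineIsometryEquiv.linearIsometryEquiv with hLdef
  have hTx : ∀ x : R3, T x = L x + T 0 := by
    intro x
    have h := T.toRealAffineIsometryEquiv.map_vadd (0 : R3) x
    simp only [vadd_eq_add, add_zero] at h
    rw [← T.coeFn_toRealAffineIsometryEquiv]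
    exact h
  set Lclm := L.toLinearIsometry.toContinuousLinearMap with hLclm
  have hLclm_apply : ∀ x : R3, Lclm x = L x := fun x => rfl
  -- the moved curve δ
  set δ : ℝ → R3 := fun t => T (γ t) with hδdef
  have hδL : δ = fun t => L (γ t) + T 0 := funext fun t => hTx (γ t)
  have hδan : ∀ t, AnalyticAt ℝ δ t := by
    intro t
    rw [hδL]
    exact ((Lclm.analyticAt (γ t)).comp (hγ t)).add analyticAt_const
  have hδanOn : AnalyticOnNhd ℝ δ Set.univ := fun x _ => hδan x
  have hδcont : Continuous δ := continuous_iff_continuousAt.2 fun t => (hδan t).continuousAt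
  have hδd : ∀ t, HasDerivAt δ (L (deriv γ t)) t := by
    intro t
    rw [hδL]
    exact (Lclm.hasFDerivAt.comp_hasDerivAt t (hγd t)).add_const (T 0)
  have hδderiv : deriv δ = fun t => L (deriv γ t) := funext fun t => (hδd t).deriv
  have hδunit : ∀ t, ‖deriv δ t‖ = 1 := by
    intro t
    rw [(hδd t).deriv, L.norm_map]
    exact hunit t
  have hκδ : ∀ t, curvature δ t = curvature γ t := by
    intro t
    have hdd : HasDerivAt (deriv δ) (L (deriv (deriv γ) t)) t := by
      rw [hδderiv]
      exact Lclm.hasFDerivAt.comp_hasDerivAt t (hud t)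
    rw [curvature, curvature, hdd.deriv, L.norm_map]
  -- range of δ
  have hδrange : ∀ t, δ t ∈ Set.range γ := by
    intro t
    rw [← hT]
    exact Set.mem_image_of_mem T (Set.mem_range_self t)
  -- full injectivity modulo the period
  have key : ∀ x : ℝ, ∃ k : ℤ, x - k * l ∈ Set.Ico 0 l := by
    intro x
    refine ⟨⌊x / l⌋, ⟨?_, ?_⟩⟩
    · rw [sub_nonneg]
      calc (⌊x / l⌋ : ℝ) * l ≤ x / l * l :=
            mul_le_mul_of_nonneg_right (Int.floor_le _) hl.le
        _ = x := div_mul_cancel₀ x hl.ne'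
    · have h1 : x / l < ⌊x / l⌋ + 1 := Int.lt_floor_add_one _
      have h2 : x / l * l < (⌊x / l⌋ + 1) * l := mul_lt_mul_of_pos_right h1 hl
      rw [div_mul_cancel₀ x hl.ne'] at h2
      linarith
  have hinj' : ∀ a b : ℝ, γ a = γ b → ∃ k : ℤ, b = a + k * l := by
    intro a b hab
    obtain ⟨ka, hka⟩ := key a
    obtain ⟨kb, hkb⟩ := key b
    have e1 : γ (a - ka * l) = γ a := hperiodic.sub_int_mul_eq ka
    have e2 : γ (b - kb * l) = γ b := hperiodic.sub_int_mul_eq kb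
    have := hinj hka hkb (by rw [e1, e2, hab])
    exact ⟨kb - ka, by push_cast; linarith⟩
  -- the starting point s0
  obtain ⟨s0, hs0⟩ := hδrange 0
  -- a coordinate with nonzero derivative of γ at s0
  have hune : deriv γ s0 ≠ 0 := by
    intro h
    have := hunit s0
    rw [h, norm_zero] at this
    norm_num at this
  obtain ⟨i, hi⟩ : ∃ i : Fin 3, deriv γ s0 i ≠ 0 := by
    by_contra h
    push_neg at h
    exact hune (PiLp.ext (fun j => by simpa using h j))
  set f : ℝ → ℝ := fun s => γ s i with hfdef
  have hfan : ∀ s, AnalyticAt ℝ f s := fun s =>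
    ((EuclideanSpace.proj i : R3 →L[ℝ] ℝ).analyticAt (γ s)).comp (hγ s)
  have hfanOn : AnalyticOnNhd ℝ f Set.univ := fun x _ => hfan x
  have hfd : ∀ s, HasDerivAt f (deriv γ s i) s := fun s =>
    (EuclideanSpace.proj i : R3 →L[ℝ] ℝ).hasFDerivAt.comp_hasDerivAt s (hγd s)
  have hfdcont : ∀ s, ContinuousAt (deriv f) s := fun s =>
    (hfanOn.deriv s (Set.mem_univ s)).continuousAt
  have hfs0 : deriv f s0 ≠ 0 := by rw [(hfd s0).deriv]; exact hi
  -- ε1 : radius where deriv f ≠ 0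
  obtain ⟨ε1, hε1, hfne⟩ : ∃ ε1 > 0, ∀ s : ℝ, dist s s0 < ε1 → deriv f s ≠ 0 := by
    have h := (hfdcont s0).eventually_ne hfs0
    rw [Metric.eventually_nhds_iff] at h
    obtain ⟨e, he, hh⟩ := h
    exact ⟨e, he, fun s hs => hh hs⟩
  set ε : ℝ := min ε1 (l / 3) with hεdef
  have hε : 0 < ε := lt_min hε1 (by linarith)
  have hεε1 : ε ≤ ε1 := min_le_left _ _
  have hεl : 2 * ε < l := by
    have := min_le_right ε1 (l / 3)
    linarith
  -- separation around s0 on a full period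
  have hK1 : γ s0 ∉ γ '' (Set.Icc s0 (s0 + l) \ (Metric.ball s0 ε ∪ Metric.ball (s0 + l) ε)) := by
    rintro ⟨v, ⟨hvI, hvW⟩, hveq⟩
    obtain ⟨k, hk⟩ := hinj' v s0 hveq
    have hkl : (0 : ℝ) ≤ -(k : ℝ) * l ∧ -(k : ℝ) * l ≤ l := by
      constructor <;> [nlinarith [hvI.1, hk]; nlinarith [hvI.2, hk]]
    have hk01 : k = 0 ∨ k = -1 := by
      have h1 : (0 : ℝ) ≤ -(k : ℝ) := by nlinarith [hkl.1]
      have h2 : -(k : ℝ) ≤ 1 := by nlinarith [hkl.2]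
      have h1' : (k : ℤ) ≤ 0 := by exact_mod_cast neg_nonneg.1 (by exact_mod_cast h1)
      have h2' : (-1 : ℤ) ≤ k := by
        have : (-1 : ℝ) ≤ (k : ℝ) := by linarith
        exact_mod_cast this
      omega
    apply hvW
    rcases hk01 with h | h
    · left
      have : v = s0 := by rw [h] at hk; push_cast at hk; linarith
      rw [this]
      exact Metric.mem_ball_self hε
    · right
      have : v = s0 + l := by rw [h] at hk; push_cast at hk; linarith
      rw [this]
      exact Metric.mem_ball_self hε
  obtain ⟨ρ1, hρ1, hsep1⟩ := sep_lemma hγcont isCompact_Icc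
    (IsOpen.union Metric.isOpen_ball Metric.isOpen_ball) hK1
  -- local parameter existence
  have hstar : ∀ t : ℝ, ∃ v : ℝ, dist (δ t) (γ s0) < ρ1 → (|v - s0| < ε ∧ γ v = δ t) := by
    intro t
    by_cases ht : dist (δ t) (γ s0) < ρ1
    · obtain ⟨w, hw⟩ := hδrange t
      obtain ⟨k, hk⟩ := key (w - s0)
      set v0 : ℝ := w - k * l with hv0
      have hγv0 : γ v0 = δ t := by rw [hperiodic.sub_int_mul_eq k, hw]
      have hv0I : v0 ∈ Set.Icc s0 (s0 + l) := by
        constructor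
        · have := hk.1; simp only [hv0]; linarith
        · have := hk.2; simp only [hv0]; linarith
      have hball : v0 ∈ Metric.ball s0 ε ∪ Metric.ball (s0 + l) ε := by
        apply hsep1 v0 hv0I
        rw [hγv0]
        exact ht
      rcases hball with h | h
      · exact ⟨v0, fun _ => ⟨by rw [← Real.dist_eq]; exact h, hγv0⟩⟩
      · refine ⟨v0 - l, fun _ => ⟨?_, ?_⟩⟩
        · have : dist v0 (s0 + l) < ε := h
          rw [Real.dist_eq] at this
          rw [show v0 - l - s0 = v0 - (s0 + l) by ring]
          exact this
        · have : γ (v0 - (1 : ℤ) * l) = γ v0 := hperiodic.sub_int_mul_eq 1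
          simpa using this.trans hγv0
    · exact ⟨s0, fun h => absurd h ht⟩
  choose g hg using hstar
  -- the open set where everything works
  set U0 : Set ℝ := {t | dist (δ t) (γ s0) < ρ1} with hU0def
  have hU0open : IsOpen U0 := isOpen_lt (by fun_prop) continuous_const
  have h0U : (0 : ℝ) ∈ U0 := by
    simp only [hU0def, Set.mem_setOf_eq, ← hs0, dist_self]
    exact hρ1
  have hgq : ∀ t ∈ U0, |g t - s0| < ε ∧ γ (g t) = δ t := fun t ht => hg t ht
  -- continuity of g on U0
  have hgcont : ∀ t ∈ U0, ContinuousAt g t := by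
    intro t ht
    rw [ContinuousAt, Metric.tendsto_nhds]
    intro η hη
    have hK2 : γ (g t) ∉ γ '' (Set.Icc (s0 - ε) (s0 + ε) \ Metric.ball (g t) η) := by
      rintro ⟨v, ⟨hvI, hvB⟩, hveq⟩
      obtain ⟨k, hk⟩ := hinj' v (g t) hveq
      have habs : |g t - v| ≤ 2 * ε := by
        have h1 := abs_lt.1 (hgq t ht).1
        rw [abs_le]
        constructor <;> linarith [hvI.1, hvI.2, h1.1, h1.2]
      have hk0 : k = 0 := by
        have : |(k : ℝ)| * l = |g t - v| := by
          rw [← abs_of_pos hl, ← abs_mul]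
          congr 1
          linarith [hk]
        have hlt : |(k : ℝ)| * l < l := by rw [this]; linarith
        have : |(k : ℝ)| < 1 := by
          by_contra hcon
          push_neg at hcon
          nlinarith
        have h5 : -(1:ℝ) < (k:ℝ) ∧ (k:ℝ) < 1 := abs_lt.1 this
        have h6 : (-1:ℤ) < k := by exact_mod_cast h5.1
        have h7 : k < 1 := by exact_mod_cast h5.2
        omega
      apply hvB
      have : v = g t := by rw [hk0] at hk; push_cast at hk; linarith
      rw [this]
      exact Metric.mem_ball_self hη
    obtain ⟨ρ2, hρ2, hsep2⟩ := sep_lemma hγcont isCompact_Icc Metric.isOpen_ball hK2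
    have hev : ∀ᶠ t' in nhds t, t' ∈ U0 ∧ dist (δ t') (δ t) < ρ2 := by
      apply Filter.Eventually.and
      · exact hU0open.eventually_mem ht
      · exact Metric.tendsto_nhds.1 hδcont.continuousAt ρ2 hρ2
    filter_upwards [hev] with t' ⟨ht', hd⟩
    have hmem : g t' ∈ Set.Icc (s0 - ε) (s0 + ε) := by
      have := (hgq t' ht').1
      rw [abs_lt] at this
      constructor <;> linarith [this.1, this.2]
    have : g t' ∈ Metric.ball (g t) η := by
      apply hsep2 _ hmem
      rw [(hgq t' ht').2, (hgq t ht).2]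
      exact hd
    exact this
  -- δi and its derivative
  set δi : ℝ → ℝ := fun t => δ t i with hδidef
  have hδian : ∀ t, AnalyticAt ℝ δi t := fun t =>
    ((EuclideanSpace.proj i : R3 →L[ℝ] ℝ).analyticAt (δ t)).comp (hδan t)
  have hδianOn : AnalyticOnNhd ℝ δi Set.univ := fun x _ => hδian x
  have hδid : ∀ t, HasDerivAt δi (deriv δi t) t := fun t =>
    (hδian t).differentiableAt.hasDerivAt
  have hδidcont : ∀ t, ContinuousAt (deriv δi) t := fun t =>
    (hδianOn.deriv t (Set.mem_univ t)).continuousAt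
  -- the candidate derivative of g
  set D : ℝ → ℝ := fun t => (deriv f (g t))⁻¹ * deriv δi t with hDdef
  have hgball : ∀ t ∈ U0, deriv f (g t) ≠ 0 := by
    intro t ht
    apply hfne
    rw [Real.dist_eq]
    exact lt_of_lt_of_le (hgq t ht).1 hεε1
  have hD1 : ∀ t ∈ U0, HasDerivAt g (D t) t := by
    intro t ht
    set m := deriv f (g t) with hm
    have hmne : m ≠ 0 := hgball t ht
    have hstrict : HasStrictDerivAt f m (g t) := analyticAt_hasStrictDerivAt (hfan (g t))
    set ginv := hstrict.localInverse f m (g t) hmne with hginv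
    have hleft : ∀ᶠ x in nhds (g t), ginv (f x) = x :=
      (hstrict.hasStrictFDerivAt_equiv hmne).eventually_left_inverse
    have hfa_eq : f (g t) = δi t := by
      show γ (g t) i = δ t i
      rw [(hgq t ht).2]
    have hev : g =ᶠ[nhds t] fun t' => ginv (δi t') := by
      have e1 : ∀ᶠ t' in nhds t, ginv (f (g t')) = g t' := (hgcont t ht).eventually hleft
      have e2 : ∀ᶠ t' in nhds t, t' ∈ U0 := hU0open.eventually_mem ht
      filter_upwards [e1, e2] with t' h1 h2
      have : f (g t') = δi t' := by
        show γ (g t') i = δ t' i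
        rw [(hgq t' h2).2]
      rw [← h1, this]
    have hg' : HasDerivAt ginv m⁻¹ (δi t) := by
      rw [← hfa_eq]
      exact (hstrict.to_localInverse hmne).hasDerivAt
    have hcomp : HasDerivAt (fun t' => ginv (δi t')) (m⁻¹ * deriv δi t) t :=
      HasDerivAt.comp t hg' (hδid t)
    exact hcomp.congr_of_eventuallyEq hev
  have hD2 : ∀ t ∈ U0, |D t| = 1 := by
    intro t ht
    have hc : HasDerivAt (γ ∘ g) (D t • deriv γ (g t)) t :=
      HasDerivAt.scomp t (hγd (g t)) (hD1 t ht)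
    have he : δ =ᶠ[nhds t] γ ∘ g := by
      filter_upwards [hU0open.eventually_mem ht] with t' h
      exact ((hgq t' h).2).symm
    have hδder : HasDerivAt δ (D t • deriv γ (g t)) t := hc.congr_of_eventuallyEq he
    have h1 : deriv δ t = D t • deriv γ (g t) := hδder.deriv
    have h2 := hδunit t
    rw [h1, norm_smul, Real.norm_eq_abs, hunit (g t), mul_one] at h2
    exact h2
  have hD3 : ∀ t ∈ U0, ContinuousAt D t := by
    intro t ht
    apply ContinuousAt.mul
    · exact ((hfdcont (g t)).comp (hgcont t ht)).inv₀ (hgball t ht)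
    · exact hδidcont t
  set σ := D 0 with hσdef
  have hσ : σ = 1 ∨ σ = -1 := (abs_eq (by norm_num : (0:ℝ) ≤ 1)).1 (hD2 0 h0U)
  have hDev : ∀ᶠ t in nhds 0, t ∈ U0 ∧ D t = σ := by
    have h1 : ∀ᶠ t in nhds 0, dist (D t) σ < 1 :=
      Metric.tendsto_nhds.1 (hD3 0 h0U) 1 one_pos
    have h2 : ∀ᶠ t in nhds 0, t ∈ U0 := hU0open.eventually_mem h0U
    filter_upwards [h1, h2] with t hd hU
    refine ⟨hU, ?_⟩
    rcases (abs_eq (by norm_num : (0:ℝ) ≤ 1)).1 (hD2 t hU) with h | h <;>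
      rcases hσ with h' | h' <;> rw [h, h'] <;>
      first
        | rfl
        | (exfalso; rw [Real.dist_eq, h, h'] at hd; norm_num at hd)
  obtain ⟨r, hr, hrball⟩ : ∃ r > 0, ∀ x : ℝ, dist x 0 < r → x ∈ U0 ∧ D x = σ := by
    rw [Metric.eventually_nhds_iff] at hDev
    obtain ⟨e, he, hh⟩ := hDev
    exact ⟨e, he, fun x hx => hh hx⟩
  -- g is affine on the ball
  set c0 := g 0 with hc0def
  have hφconst : ∀ a b : ℝ, -r < a → a ≤ b → b < r →
      g b - σ * b = g a - σ * a := by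
    intro a b ha hab hb
    have hsub : Set.Icc a b ⊆ Metric.ball (0:ℝ) r := by
      intro x hx
      rw [Metric.mem_ball, Real.dist_eq, sub_zero, abs_lt]
      exact ⟨by linarith [hx.1], by linarith [hx.2]⟩
    have hder : ∀ x ∈ Set.Icc a b, HasDerivAt (fun y => g y - σ * y) (D x - σ) x := by
      intro x hx
      have hxb := hrball x (by
        rw [Real.dist_eq, sub_zero]
        exact abs_lt.2 ⟨by linarith [hx.1], by linarith [hx.2]⟩)
      exact (hD1 x hxb.1).sub (by simpa using (hasDerivAt_id x).const_mul σ)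
    have hcont : ContinuousOn (fun y => g y - σ * y) (Set.Icc a b) :=
      fun x hx => ((hder x hx).continuousAt).continuousWithinAt
    have hder0 : ∀ x ∈ Set.Ico a b, HasDerivWithinAt (fun y => g y - σ * y) 0 (Set.Ici x) x := by
      intro x hx
      have hx' : x ∈ Set.Icc a b := ⟨hx.1, hx.2.le⟩
      have hxb := hrball x (by rw [Real.dist_eq, sub_zero]; exact abs_lt.2 ⟨by linarith [hx'.1], by linarith [hx'.2]⟩)
      have := (hder x hx').hasDerivWithinAt (s := Set.Ici x)
      rwa [hxb.2, sub_self] at this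
    have := constant_of_has_deriv_right_zero hcont hder0 b ⟨hab, le_refl b⟩
    exact this
  have hglin : ∀ x : ℝ, |x| < r → g x = σ * x + c0 := by
    intro x hx
    rcases le_or_gt 0 x with h | h
    · have := hφconst 0 x (by linarith) h (by rw [abs_of_nonneg h] at hx; exact hx)
      simp only [mul_zero, sub_zero] at this
      rw [hc0def]; linarith
    · have := hφconst x 0 (by rw [abs_of_neg h] at hx; linarith) h.le hr
      simp only [mul_zero, sub_zero] at this
      rw [hc0def]; linarith
  -- local equality, then global by analyticity
  have hhan : ∀ x : ℝ, AnalyticAt ℝ (fun y => γ (σ * y + c0)) x := by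
    intro x
    have hin : AnalyticAt ℝ (fun y : ℝ => σ * y + c0) x :=
      (analyticAt_const.mul analyticAt_id).add analyticAt_const
    have h2 : AnalyticAt ℝ (γ ∘ fun y : ℝ => σ * y + c0) x :=
      AnalyticAt.comp (f := fun y : ℝ => σ * y + c0) (hγ (σ * x + c0)) hin
    exact h2
  have hhanOn : AnalyticOnNhd ℝ (fun y => γ (σ * y + c0)) Set.univ := fun x _ => hhan x
  have hloc : δ =ᶠ[nhds 0] fun y => γ (σ * y + c0) := by
    filter_upwards [Metric.ball_mem_nhds (0:ℝ) hr] with x hx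
    have hx' : |x| < r := by rwa [Metric.mem_ball, Real.dist_eq, sub_zero] at hx
    have hxU : x ∈ U0 := (hrball x (by rw [Real.dist_eq, sub_zero]; exact hx')).1
    rw [← (hgq x hxU).2, hglin x hx']
  have hglob : δ = fun y => γ (σ * y + c0) :=
    AnalyticOnNhd.eq_of_eventuallyEq hδanOn hhanOn hloc
  -- curvature of the reparametrized curve
  have hw : ∀ x : ℝ, HasDerivAt (fun y : ℝ => σ * y + c0) σ x := fun x => by
    simpa using ((hasDerivAt_id x).const_mul σ).add_const c0
  have hhd : deriv (fun y => γ (σ * y + c0)) = fun y => σ • deriv γ (σ * y + c0) :=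
    funext fun x => (HasDerivAt.scomp x (hγd (σ * x + c0)) (hw x)).deriv
  have habsσ : |σ| = 1 := by rcases hσ with h | h <;> rw [h] <;> norm_num
  have hκh : ∀ t, curvature (fun y => γ (σ * y + c0)) t = curvature γ (σ * t + c0) := by
    intro t
    have h2 : HasDerivAt (fun y => deriv γ (σ * y + c0)) (σ • deriv (deriv γ) (σ * t + c0)) t := by
      have := HasDerivAt.scomp t (hud (σ * t + c0)) (hw t); exact this
    have h3 : HasDerivAt (deriv (fun y => γ (σ * y + c0)))
        (σ • σ • deriv (deriv γ) (σ * t + c0)) t := by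
      rw [hhd]
      exact h2.const_smul σ
    rw [curvature, curvature, h3.deriv, norm_smul, norm_smul, Real.norm_eq_abs, habsσ,
      one_mul, one_mul]
  -- nontriviality
  refine ⟨σ, c0, hσ, ?_, ?_⟩
  · rintro ⟨hσ1, k, hk⟩
    obtain ⟨t0, ht0⟩ := hP
    apply hTP
    have h1 : δ t0 = γ (σ * t0 + c0) := congrFun hglob t0
    rw [hσ1, one_mul, hk] at h1
    have h2 : γ (t0 + k * l) = γ t0 := by
      have := hperiodic.sub_int_mul_eq (x := t0) (-k)
      push_cast at this
      rw [show t0 - -(k:ℝ) * l = t0 + k * l by ring] at this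
      exact this
    rw [← ht0]
    show δ t0 = γ t0
    rw [h1, h2]
  · intro t
    have h1 : curvature γ t = curvature δ t := (hκδ t).symm
    rw [h1, hglob, hκh t]
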